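/- Let 𝕂 be a field equipped with a non-Archimedean absolute value, let G be a compactly generated topological group (generated as a group by a compact subset), and let E be a normed 𝕂-vector space on which G acts by linear isometries. If f : G → E is continuous and sup_{g,h∈G} ‖g·f(h) − f(gh) + f(g)‖ < ∞, then f is bounded: sup_{g∈G} ‖f(g)‖ < ∞. -/

import Mathlib

private lemma norm_sub_le_max' {E : Type*} [NormedAddCommGroup E] [IsUltrametricDist E]
    (a b : E) : ‖a - b‖ ≤ max ‖a‖ ‖b‖ := by
  rw [sub_eq_add_neg]
  simpa using IsUltrametricDist.norm_add_le_max a (-b)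


/-- Over a non-Archimedean valued field `𝕂`, every continuous
`1`-quasicocycle on a compactly generated topological group `G` with values in a normed
`𝕂[G]`-module (a normed `𝕂`-vector space on which `G` acts by linear isometries) is bounded. -/
theorem quasicocycle_bounded_of_compactlyGenerated
    (𝕂 : Type*) [NormedField 𝕂] [IsUltrametricDist 𝕂]
    (G : Type*) [Group G] [TopologicalSpace G] [IsTopologicalGroup G]
    (K : Set G) (hK : IsCompact K) (hgen : Subgroup.closure K = ⊤)
    (E : Type*) [NormedAddCommGroup E] [NormedSpace 𝕂 E] [IsUltrametricDist E]
    (ρ : G →* (E ≃ₗᵢ[𝕂] E))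
    (f : G → E) (hf : Continuous f)
    (D : ℝ) (hD : ∀ g h : G, ‖ρ g (f h) - f (g * h) + f g‖ ≤ D) :
    ∃ C : ℝ, ∀ g : G, ‖f g‖ ≤ C := by
  obtain ⟨M, hM⟩ := (hK.image (hf.norm)).bddAbove
  set C : ℝ := max M (max D ‖f 1‖) with hC
  refine ⟨C, fun g => ?_⟩
  have hg : g ∈ Subgroup.closure K := hgen ▸ Subgroup.mem_top g
  induction hg using Subgroup.closure_induction with
  | mem x hx =>
    exact le_max_of_le_left (hM ⟨x, hx, rfl⟩)
  | one =>
    exact le_max_of_le_right (le_max_right _ _)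
  | mul x y _ _ hx hy =>
    have key : f (x * y) = ρ x (f y) + f x - (ρ x (f y) - f (x * y) + f x) := by abel
    calc ‖f (x * y)‖ = ‖ρ x (f y) + f x - (ρ x (f y) - f (x * y) + f x)‖ := by rw [← key]
      _ ≤ max ‖ρ x (f y) + f x‖ ‖ρ x (f y) - f (x * y) + f x‖ :=
          norm_sub_le_max' _ _
      _ ≤ max (max ‖ρ x (f y)‖ ‖f x‖) D := by
          exact max_le_max (IsUltrametricDist.norm_add_le_max _ _) (hD x y)
      _ ≤ C := by
          rw [(ρ x).norm_map]
          exact max_le (max_le hy hx) (le_max_of_le_right (le_max_left _ _))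
  | inv x _ hx =>
    have key : ρ x (f x⁻¹) = (ρ x (f x⁻¹) - f (x * x⁻¹) + f x) + f (x * x⁻¹) - f x := by abel
    calc ‖f x⁻¹‖ = ‖ρ x (f x⁻¹)‖ := ((ρ x).norm_map _).symm
      _ = ‖(ρ x (f x⁻¹) - f (x * x⁻¹) + f x) + f (x * x⁻¹) - f x‖ := by rw [← key]
      _ ≤ max ‖(ρ x (f x⁻¹) - f (x * x⁻¹) + f x) + f (x * x⁻¹)‖ ‖f x‖ :=
          norm_sub_le_max' _ _
      _ ≤ max (max D ‖f (x * x⁻¹)‖) ‖f x‖ :=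
          max_le_max (IsUltrametricDist.norm_add_le_max _ _ |>.trans
            (max_le_max (hD x x⁻¹) le_rfl)) le_rfl
      _ ≤ C := by
          rw [mul_inv_cancel]
          exact max_le (max_le (le_max_of_le_right (le_max_left _ _))
            (le_max_of_le_right (le_max_right _ _))) hx
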